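/- Let A be a self-adjoint operator on a finite-dimensional Hilbert space, v a unit vector, and for t ∈ ℝ set A_t = A + t⟨v,·⟩v (rank-one perturbation). Let g : ℝ → ℝ be bounded with 0 ≤ g ≤ 1 and nondecreasing. Then for any a < b: tr g(A_b − λ) − tr g(A_a − λ) ≤ 1. -/

import Mathlib

open scoped InnerProductSpace
open Matrix

namespace RankOneAux

variable {n : ℕ}

lemma inner_map_re (T : EuclideanSpace ℂ (Fin n) →ₗ[ℂ] EuclideanSpace ℂ (Fin n))
    (f : OrthonormalBasis (Fin n) ℂ (EuclideanSpace ℂ (Fin n))) (ν : Fin n → ℝ)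
    (hf : ∀ i, T (f i) = (ν i : ℂ) • f i) (x : EuclideanSpace ℂ (Fin n)) :
    (⟪x, T x⟫_ℂ).re = ∑ i, ν i * ‖⟪f i, x⟫_ℂ‖ ^ 2 := by
  have hTx : T x = ∑ i, (⟪f i, x⟫_ℂ * (ν i : ℂ)) • f i := by
    conv_lhs => rw [← f.sum_repr' x]
    rw [map_sum]
    refine Finset.sum_congr rfl fun i _ => ?_
    rw [LinearMap.map_smul, hf, smul_smul]
  have key : ⟪x, T x⟫_ℂ = ((∑ i, ν i * ‖⟪f i, x⟫_ℂ‖ ^ 2 : ℝ) : ℂ) := by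
    rw [hTx, inner_sum]
    push_cast
    refine Finset.sum_congr rfl fun i _ => ?_
    rw [inner_smul_right, ← inner_conj_symm x (f i), mul_right_comm,
      RCLike.mul_conj (K := ℂ) (⟪f i, x⟫_ℂ)]
    push_cast
    exact mul_comm _ _
  rw [key, Complex.ofReal_re]

lemma norm_sq_eq (f : OrthonormalBasis (Fin n) ℂ (EuclideanSpace ℂ (Fin n)))
    (x : EuclideanSpace ℂ (Fin n)) :
    ‖x‖ ^ 2 = ∑ i, ‖⟪f i, x⟫_ℂ‖ ^ 2 := by
  have h := f.sum_inner_mul_inner x x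
  have : ∀ i : Fin n, ⟪x, f i⟫_ℂ * ⟪f i, x⟫_ℂ = ((‖⟪f i, x⟫_ℂ‖ ^ 2 : ℝ) : ℂ) := by
    intro i
    rw [← inner_conj_symm x (f i), RCLike.conj_mul (K := ℂ)]
    push_cast
    rfl
  rw [Finset.sum_congr rfl (fun i _ => this i)] at h
  have h2 : ((∑ i, ‖⟪f i, x⟫_ℂ‖ ^ 2 : ℝ) : ℂ) = ⟪x, x⟫_ℂ := by push_cast at h ⊢; exact h
  have h3 := congrArg Complex.re h2
  rw [Complex.ofReal_re] at h3
  rw [h3, ← inner_self_eq_norm_sq (𝕜 := ℂ) x]; rfl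

lemma rayleigh_le (T : EuclideanSpace ℂ (Fin n) →ₗ[ℂ] EuclideanSpace ℂ (Fin n))
    (f : OrthonormalBasis (Fin n) ℂ (EuclideanSpace ℂ (Fin n))) (ν : Fin n → ℝ)
    (hf : ∀ i, T (f i) = (ν i : ℂ) • f i) (x : EuclideanSpace ℂ (Fin n))
    (c : ℝ) (S : Finset (Fin n)) (hS : ∀ i ∈ S, ν i ≤ c)
    (hx : ∀ i ∉ S, ⟪f i, x⟫_ℂ = 0) :
    (⟪x, T x⟫_ℂ).re ≤ c * ‖x‖ ^ 2 := by
  rw [inner_map_re T f ν hf, norm_sq_eq f x]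
  have hz : ∀ i ∈ Finset.univ, i ∉ S → ν i * ‖⟪f i, x⟫_ℂ‖ ^ 2 = 0 := by
    intro i _ hi; rw [hx i hi]; simp
  have hz2 : ∀ i ∈ Finset.univ, i ∉ S → ‖⟪f i, x⟫_ℂ‖ ^ 2 = 0 := by
    intro i _ hi; rw [hx i hi]; simp
  rw [← Finset.sum_subset S.subset_univ hz, ← Finset.sum_subset S.subset_univ hz2,
    Finset.mul_sum]
  refine Finset.sum_le_sum fun i hi => ?_
  exact mul_le_mul_of_nonneg_right (hS i hi) (by positivity)

lemma rayleigh_ge (T : EuclideanSpace ℂ (Fin n) →ₗ[ℂ] EuclideanSpace ℂ (Fin n))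
    (f : OrthonormalBasis (Fin n) ℂ (EuclideanSpace ℂ (Fin n))) (ν : Fin n → ℝ)
    (hf : ∀ i, T (f i) = (ν i : ℂ) • f i) (x : EuclideanSpace ℂ (Fin n))
    (c : ℝ) (S : Finset (Fin n)) (hS : ∀ i ∈ S, c ≤ ν i)
    (hx : ∀ i ∉ S, ⟪f i, x⟫_ℂ = 0) :
    c * ‖x‖ ^ 2 ≤ (⟪x, T x⟫_ℂ).re := by
  rw [inner_map_re T f ν hf, norm_sq_eq f x]
  have hz : ∀ i ∈ Finset.univ, i ∉ S → ν i * ‖⟪f i, x⟫_ℂ‖ ^ 2 = 0 := by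
    intro i _ hi; rw [hx i hi]; simp
  have hz2 : ∀ i ∈ Finset.univ, i ∉ S → ‖⟪f i, x⟫_ℂ‖ ^ 2 = 0 := by
    intro i _ hi; rw [hx i hi]; simp
  rw [← Finset.sum_subset S.subset_univ hz, ← Finset.sum_subset S.subset_univ hz2,
    Finset.mul_sum]
  refine Finset.sum_le_sum fun i hi => ?_
  exact mul_le_mul_of_nonneg_right (hS i hi) (by positivity)

lemma inner_eq_zero_of_mem_span (f : OrthonormalBasis (Fin n) ℂ (EuclideanSpace ℂ (Fin n)))
    (S : Finset (Fin n)) (x : EuclideanSpace ℂ (Fin n))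
    (hx : x ∈ Submodule.span ℂ (f '' (S : Set (Fin n)))) {i : Fin n} (hi : i ∉ S) :
    ⟪f i, x⟫_ℂ = 0 := by
  have hle : Submodule.span ℂ (f '' (S : Set (Fin n))) ≤
      LinearMap.ker ((innerSL ℂ (f i)).toLinearMap) := by
    rw [Submodule.span_le]
    rintro y ⟨j, hj, rfl⟩
    simp only [SetLike.mem_coe, LinearMap.mem_ker, ContinuousLinearMap.coe_coe, innerSL_apply_apply]
    exact f.orthonormal.2 (fun h => hi (h ▸ hj))
  simpa using hle hx

lemma finrank_span_orthofam (f : OrthonormalBasis (Fin n) ℂ (EuclideanSpace ℂ (Fin n)))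
    (S : Finset (Fin n)) :
    Module.finrank ℂ (Submodule.span ℂ (f '' (S : Set (Fin n)))) = S.card := by
  have hli : LinearIndependent ℂ (fun j : {x // x ∈ S} => f j) :=
    f.orthonormal.linearIndependent.comp Subtype.val Subtype.val_injective
  have hr : Set.range (fun j : {x // x ∈ S} => f j) = ⇑f '' (S : Set (Fin n)) := by
    ext y
    simp [Set.mem_image, Set.mem_range]
  rw [← hr, finrank_span_eq_card hli, Fintype.card_coe]

lemma toEuclideanLin_eigen {M : Matrix (Fin n) (Fin n) ℂ} (hM : M.IsHermitian) (i : Fin n) :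
    Matrix.toEuclideanLin M (hM.eigenvectorBasis i) =
      ((hM.eigenvalues i : ℝ) : ℂ) • hM.eigenvectorBasis i := by
  have h := hM.mulVec_eigenvectorBasis i
  apply (WithLp.equiv 2 (Fin n → ℂ)).injective
  ext j
  have := congrFun h j
  simpa [Matrix.toEuclideanLin_apply, Pi.smul_apply, Complex.real_smul] using this

lemma inf_dim (U W : Submodule ℂ (EuclideanSpace ℂ (Fin n))) :
    Module.finrank ℂ U + Module.finrank ℂ W ≤ n + Module.finrank ℂ ↥(U ⊓ W) := by
  have h := Submodule.finrank_sup_add_finrank_inf_eq U W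
  have h2 : Module.finrank ℂ ↥(U ⊔ W) ≤ n := by
    simpa [finrank_euclideanSpace_fin] using Submodule.finrank_le (U ⊔ W)
  omega

lemma span_v_perp_dim (v : EuclideanSpace ℂ (Fin n)) :
    n - 1 ≤ Module.finrank ℂ ↥((ℂ ∙ v)ᗮ) := by
  have h := Submodule.finrank_add_finrank_orthogonal (K := ℂ ∙ v)
  rw [finrank_euclideanSpace_fin] at h
  rcases eq_or_ne v 0 with rfl | hv
  · rw [Submodule.span_zero_singleton] at h ⊢; rw [finrank_bot] at h; omega
  · rw [finrank_span_singleton hv] at h; omega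

lemma interlace_core {M C : Matrix (Fin n) (Fin n) ℂ} (hM : M.IsHermitian) (hC : C.IsHermitian)
    (v : EuclideanSpace ℂ (Fin n))
    (hMC : ∀ x : EuclideanSpace ℂ (Fin n), ⟪v, x⟫_ℂ = 0 →
      Matrix.toEuclideanLin M x = Matrix.toEuclideanLin C x)
    (σM σC : Equiv.Perm (Fin n))
    (hνmono : Monotone (hM.eigenvalues ∘ σM)) (hμmono : Monotone (hC.eigenvalues ∘ σC))
    (k : Fin n) (hk : k.1 + 1 < n) :
    hM.eigenvalues (σM k) ≤ hC.eigenvalues (σC ⟨k.1 + 1, hk⟩) := by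
  classical
  set f : OrthonormalBasis (Fin n) ℂ (EuclideanSpace ℂ (Fin n)) :=
    hM.eigenvectorBasis.reindex σM.symm with hfdef
  set e : OrthonormalBasis (Fin n) ℂ (EuclideanSpace ℂ (Fin n)) :=
    hC.eigenvectorBasis.reindex σC.symm with hedef
  set ν : Fin n → ℝ := fun i => hM.eigenvalues (σM i) with hνdef
  set μ : Fin n → ℝ := fun i => hC.eigenvalues (σC i) with hμdef
  have hfe : ∀ i, f i = hM.eigenvectorBasis (σM i) := by
    intro i; rw [hfdef, OrthonormalBasis.reindex_apply]; simp
  have hee : ∀ i, e i = hC.eigenvectorBasis (σC i) := by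
    intro i; rw [hedef, OrthonormalBasis.reindex_apply]; simp
  have hfM : ∀ i, Matrix.toEuclideanLin M (f i) = ((ν i : ℝ) : ℂ) • f i := by
    intro i; rw [hfe i]; exact toEuclideanLin_eigen hM (σM i)
  have heC : ∀ i, Matrix.toEuclideanLin C (e i) = ((μ i : ℝ) : ℂ) • e i := by
    intro i; rw [hee i]; exact toEuclideanLin_eigen hC (σC i)
  set k1 : Fin n := ⟨k.1 + 1, hk⟩ with hk1def
  set S1 : Finset (Fin n) := Finset.Iic k1
  set S2 : Finset (Fin n) := Finset.Ici k
  set V1 : Submodule ℂ (EuclideanSpace ℂ (Fin n)) :=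
    Submodule.span ℂ (⇑e '' (S1 : Set (Fin n)))
  set V2 : Submodule ℂ (EuclideanSpace ℂ (Fin n)) :=
    Submodule.span ℂ (⇑f '' (S2 : Set (Fin n)))
  set Vv : Submodule ℂ (EuclideanSpace ℂ (Fin n)) := (ℂ ∙ v)ᗮ
  have hd1 : Module.finrank ℂ V1 = k.1 + 2 := by
    rw [finrank_span_orthofam e S1]
    simp [S1, Fin.card_Iic, hk1def]
  have hd2 : Module.finrank ℂ V2 = n - k.1 := by
    rw [finrank_span_orthofam f S2]
    simp [S2, Fin.card_Ici]
  have hdv : n - 1 ≤ Module.finrank ℂ Vv := span_v_perp_dim v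
  have hW1 : k.1 + 1 ≤ Module.finrank ℂ ↥(V1 ⊓ Vv) := by
    have := inf_dim V1 Vv
    omega
  have hW : 1 ≤ Module.finrank ℂ ↥((V1 ⊓ Vv) ⊓ V2) := by
    have := inf_dim (V1 ⊓ Vv) V2
    have hkn : k.1 + 1 < n := hk
    omega
  obtain ⟨x, hx0⟩ := Module.finrank_pos_iff_exists_ne_zero.mp hW
  have hx1 : (x : EuclideanSpace ℂ (Fin n)) ∈ V1 := x.2.1.1
  have hxv : (x : EuclideanSpace ℂ (Fin n)) ∈ Vv := x.2.1.2
  have hx2 : (x : EuclideanSpace ℂ (Fin n)) ∈ V2 := x.2.2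
  have hxne : (x : EuclideanSpace ℂ (Fin n)) ≠ 0 := fun h => hx0 (Subtype.ext h)
  have hvx : ⟪v, (x : EuclideanSpace ℂ (Fin n))⟫_ℂ = 0 :=
    (Submodule.mem_orthogonal _ _).mp hxv v (Submodule.mem_span_singleton_self v)
  have hub : (⟪(x : EuclideanSpace ℂ (Fin n)),
      Matrix.toEuclideanLin C (x : EuclideanSpace ℂ (Fin n))⟫_ℂ).re ≤ μ k1 * ‖(x : EuclideanSpace ℂ (Fin n))‖ ^ 2 := by
    refine rayleigh_le _ e μ heC _ _ S1 (fun i hi => hμmono (Finset.mem_Iic.mp hi)) ?_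
    exact fun i hi => inner_eq_zero_of_mem_span e S1 _ hx1 hi
  have hlb : ν k * ‖(x : EuclideanSpace ℂ (Fin n))‖ ^ 2 ≤ (⟪(x : EuclideanSpace ℂ (Fin n)),
      Matrix.toEuclideanLin M (x : EuclideanSpace ℂ (Fin n))⟫_ℂ).re := by
    refine rayleigh_ge _ f ν hfM _ _ S2 (fun i hi => hνmono (Finset.mem_Ici.mp hi)) ?_
    exact fun i hi => inner_eq_zero_of_mem_span f S2 _ hx2 hi
  rw [hMC _ hvx] at hlb
  have hnorm : (0:ℝ) < ‖(x : EuclideanSpace ℂ (Fin n))‖ ^ 2 := pow_pos (norm_pos_iff.mpr hxne) 2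
  have := le_trans hlb hub
  exact le_of_mul_le_mul_right (by linarith) hnorm

lemma sum_step {n : ℕ} (p q : Fin n → ℝ) (hp0 : ∀ i, 0 ≤ p i) (hq1 : ∀ i, q i ≤ 1)
    (hpq : ∀ (k : Fin n) (hk : k.1 + 1 < n), q k ≤ p ⟨k.1 + 1, hk⟩) :
    ∑ i, q i ≤ (∑ i, p i) + 1 := by
  cases n with
  | zero => simp
  | succ m =>
    set p' : ℕ → ℝ := fun i => if h : i < m + 1 then p ⟨i, h⟩ else 0 with hp'
    set q' : ℕ → ℝ := fun i => if h : i < m + 1 then q ⟨i, h⟩ else 0 with hq'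
    have hqs : ∑ i, q i = ∑ i ∈ Finset.range (m + 1), q' i := by
      rw [← Fin.sum_univ_eq_sum_range]
      exact Finset.sum_congr rfl fun i _ => by simp [hq', i.2, Fin.eta]; exact fun h => absurd i.isLt (by omega)
    have hps : ∑ i, p i = ∑ i ∈ Finset.range (m + 1), p' i := by
      rw [← Fin.sum_univ_eq_sum_range]
      exact Finset.sum_congr rfl fun i _ => by simp [hp', i.2, Fin.eta]; exact fun h => absurd i.isLt (by omega)
    rw [hqs, hps, Finset.sum_range_succ, Finset.sum_range_succ' (f := p')]
    have h1 : q' m ≤ 1 := by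
      simp only [hq', dif_pos (Nat.lt_succ_self m)]
      exact hq1 _
    have h2 : ∑ i ∈ Finset.range m, q' i ≤ ∑ i ∈ Finset.range m, p' (i + 1) := by
      refine Finset.sum_le_sum fun i hi => ?_
      have him : i < m := Finset.mem_range.mp hi
      have him1 : i < m + 1 := Nat.lt_succ_of_lt him
      have him2 : i + 1 < m + 1 := Nat.succ_lt_succ him
      simp only [hq', hp', dif_pos him1, dif_pos him2]
      exact hpq ⟨i, him1⟩ him2
    have h3 : 0 ≤ p' 0 := by
      simp only [hp', dif_pos (Nat.succ_pos m)]
      exact hp0 _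
    linarith

end RankOneAux

open RankOneAux

/-- Rank-one perturbation bound: for A_t = A + t⟨v,·⟩v with v a unit vector and
0 ≤ g ≤ 1 nondecreasing, tr g(A_b − λ) − tr g(A_a − λ) ≤ 1 for a < b. -/
theorem rank_one_trace_bound (n : ℕ) (A : Matrix (Fin n) (Fin n) ℂ) (hA : A.IsHermitian)
    (v : EuclideanSpace ℂ (Fin n)) (hv : ‖v‖ = 1)
    (g : ℝ → ℝ) (hg01 : ∀ t, 0 ≤ g t ∧ g t ≤ 1) (hgmono : Monotone g)
    (a b : ℝ) (hab : a < b)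
    (P : Matrix (Fin n) (Fin n) ℂ) (hP : ∀ i j, P i j = v i * starRingEnd ℂ (v j))
    (hAa : (A + (a : ℂ) • P).IsHermitian) (hAb : (A + (b : ℂ) • P).IsHermitian)
    (lam : ℝ) :
    (∑ i, g (hAb.eigenvalues i - lam)) - (∑ i, g (hAa.eigenvalues i - lam)) ≤ 1 := by
  classical
  have hPx : ∀ x : EuclideanSpace ℂ (Fin n), ⟪v, x⟫_ℂ = 0 → P *ᵥ (x : Fin n → ℂ) = 0 := by
    intro x hx
    funext i
    have hinner : ∑ j, starRingEnd ℂ (v j) * x j = 0 := by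
      rw [← hx, PiLp.inner_apply]; simp only [RCLike.inner_apply']
    calc (P *ᵥ (x : Fin n → ℂ)) i = ∑ j, P i j * x j := rfl
      _ = ∑ j, v i * (starRingEnd ℂ (v j) * x j) := by
          refine Finset.sum_congr rfl fun j _ => ?_; rw [hP i j]; ring
      _ = v i * ∑ j, starRingEnd ℂ (v j) * x j := by rw [Finset.mul_sum]
      _ = 0 := by rw [hinner, mul_zero]
  have hMC : ∀ x : EuclideanSpace ℂ (Fin n), ⟪v, x⟫_ℂ = 0 →
      Matrix.toEuclideanLin (A + (b : ℂ) • P) x = Matrix.toEuclideanLin (A + (a : ℂ) • P) x := by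
    intro x hx
    have h0 := hPx x hx
    apply (WithLp.equiv 2 (Fin n → ℂ)).injective
    simp only [Matrix.toEuclideanLin_apply, Equiv.apply_symm_apply, Matrix.add_mulVec,
      Matrix.smul_mulVec]
    have h0' : P *ᵥ (WithLp.equiv 2 (Fin n → ℂ)) x = 0 := h0
    rw [h0]
    simp
  set σb := Tuple.sort hAb.eigenvalues with hσb
  set σa := Tuple.sort hAa.eigenvalues with hσa
  have hmb : Monotone (hAb.eigenvalues ∘ σb) := Tuple.monotone_sort _
  have hma : Monotone (hAa.eigenvalues ∘ σa) := Tuple.monotone_sort _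
  have hkey : ∀ (k : Fin n) (hk : k.1 + 1 < n),
      hAb.eigenvalues (σb k) ≤ hAa.eigenvalues (σa ⟨k.1 + 1, hk⟩) :=
    fun k hk => interlace_core hAb hAa v hMC σb σa hmb hma k hk
  have hsb : ∑ i, g (hAb.eigenvalues i - lam) = ∑ i, g (hAb.eigenvalues (σb i) - lam) :=
    (Equiv.sum_comp σb (fun i => g (hAb.eigenvalues i - lam))).symm
  have hsa : ∑ i, g (hAa.eigenvalues i - lam) = ∑ i, g (hAa.eigenvalues (σa i) - lam) :=
    (Equiv.sum_comp σa (fun i => g (hAa.eigenvalues i - lam))).symm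
  rw [hsb, hsa]
  have := sum_step (fun i => g (hAa.eigenvalues (σa i) - lam))
    (fun i => g (hAb.eigenvalues (σb i) - lam))
    (fun i => (hg01 _).1) (fun i => (hg01 _).2)
    (fun k hk => hgmono (by have := hkey k hk; linarith))
  linarith
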